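/- Let g be a Fejér function, i.e. g is C¹ on a half-line, g'(x) tends monotonically to 0 as x → ∞, and x·|g'(x)| → ∞. Then the sequence (g(n) mod 1)_{n∈ℕ} is equidistributed in the torus ℝ/ℤ. -/

import Mathlib

open Filter Set

lemma tel {G : Type*} [AddCommGroup G] (f : ℕ → G) (a b : ℕ) (h : a ≤ b) :
    ∑ n ∈ Finset.Ico a b, (f (n+1) - f n) = f b - f a := by
  induction b, h using Nat.le_induction with
  | base => simp
  | succ b hb ih => rw [Finset.sum_Ico_succ_top (by omega), ih]; abel

lemma abel_id (u c : ℕ → ℂ) (a b : ℕ) (h : a ≤ b) :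
    ∑ n ∈ Finset.Ico a b, u n * c n
      = (∑ n ∈ Finset.Ico a b, u n) * c b
        - ∑ n ∈ Finset.Ico a b, (∑ k ∈ Finset.Ico a (n+1), u k) * (c (n+1) - c n) := by
  induction b, h using Nat.le_induction with
  | base => simp
  | succ b hb ih =>
      rw [Finset.sum_Ico_succ_top (by omega : a ≤ b), Finset.sum_Ico_succ_top (by omega : a ≤ b),
        Finset.sum_Ico_succ_top (by omega : a ≤ b), ih, Finset.sum_Ico_succ_top (by omega : a ≤ b)]
      ring

lemma wident (d : ℝ) (hs : Real.sin (Real.pi * d) ≠ 0) :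
    (1 - Complex.exp (2*Real.pi*Complex.I*(d:ℂ)))
      * (1/2 + Complex.I * ((Real.cos (Real.pi*d)/(2*Real.sin (Real.pi*d)) : ℝ) : ℂ)) = 1 := by
  set z : ℂ := (Real.pi : ℂ) * d with hzdef
  have hz : Complex.sin z ≠ 0 := by
    rw [show z = ((Real.pi*d : ℝ):ℂ) by push_cast; ring, ← Complex.ofReal_sin]
    exact_mod_cast hs
  have h1 : Complex.exp (2*Real.pi*Complex.I*(d:ℂ)) = (Complex.cos z + Complex.sin z * Complex.I)^2 := by
    rw [← Complex.exp_mul_I, ← Complex.exp_nat_mul]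
    norm_num; ring_nf; rw [hzdef]; congr 1; ring
  have h2 : ((Real.cos (Real.pi*d)/(2*Real.sin (Real.pi*d)) : ℝ) : ℂ)
      = Complex.cos z / (2 * Complex.sin z) := by
    push_cast [hzdef]; ring_nf
  rw [h1, h2]
  have hpy := Complex.sin_sq_add_cos_sq z
  field_simp
  ring_nf
  linear_combination (-(Complex.cos z * Complex.I + Complex.sin z)) * hpy + (-(Complex.cos z * Complex.sin z^2 * Complex.I) - Complex.sin z^3) * Complex.I_sq + (2*Complex.sin z) * hpy + (-(2*Complex.cos z^2*Complex.sin z)) * Complex.I_sq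

set_option maxHeartbeats 1000000 in
lemma kl (a : ℕ → ℝ) (M N : ℕ) (hMN : M ≤ N) (δ : ℝ) (hδ : 0 < δ)
    (hlb : ∀ n, M ≤ n → n ≤ N → δ ≤ a (n+1) - a n)
    (hub : ∀ n, M ≤ n → n ≤ N → a (n+1) - a n ≤ 1/4)
    (hanti : ∀ m n, M ≤ m → m ≤ n → n ≤ N → a (n+1) - a n ≤ a (m+1) - a m) :
    ‖∑ n ∈ Finset.Icc M N, Complex.exp (2*Real.pi*Complex.I*(a n : ℂ))‖
      ≤ 2 + 2/(Real.pi*δ) := by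
  have hπ := Real.pi_pos
  set E : ℕ → ℂ := fun n => Complex.exp (2*Real.pi*Complex.I*(a n : ℂ)) with hE
  set d : ℕ → ℝ := fun n => a (n+1) - a n with hd
  set c : ℕ → ℝ := fun n => Real.cos (Real.pi * d n) / (2 * Real.sin (Real.pi * d n)) with hc
  set C : ℕ → ℝ := fun n => c (min n N) with hC
  set u : ℕ → ℂ := fun n => E n - E (n+1) with hu
  -- basic facts on the range
  have hdmem : ∀ n, M ≤ n → n ≤ N → δ ≤ d n ∧ d n ≤ 1/4 := fun n h1 h2 => ⟨hlb n h1 h2, hub n h1 h2⟩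
  have hdanti : ∀ m n, M ≤ m → m ≤ n → n ≤ N → d n ≤ d m := hanti
  have hdval : ∀ n, d n = a (n+1) - a n := fun n => rfl
  clear_value d
  have hsinpos : ∀ n, M ≤ n → n ≤ N → 0 < Real.sin (Real.pi * d n) := by
    intro n h1 h2
    obtain ⟨hl, hr⟩ := hdmem n h1 h2
    have hd0 : 0 < d n := lt_of_lt_of_le hδ hl
    apply Real.sin_pos_of_pos_of_lt_pi
    · positivity
    · nlinarith [mul_le_mul_of_nonneg_left hr hπ.le]
  have hcospos : ∀ n, M ≤ n → n ≤ N → 0 < Real.cos (Real.pi * d n) := by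
    intro n h1 h2
    obtain ⟨hl, hr⟩ := hdmem n h1 h2
    have hd0 : 0 < d n := lt_of_lt_of_le hδ hl
    apply Real.cos_pos_of_mem_Ioo
    constructor
    · nlinarith [mul_pos hπ hd0]
    · nlinarith [mul_le_mul_of_nonneg_left hr hπ.le]
  have hcnonneg : ∀ n, M ≤ n → n ≤ N → 0 ≤ c n := by
    intro n h1 h2
    exact div_nonneg (hcospos n h1 h2).le (by nlinarith [hsinpos n h1 h2])
  have hcbound : ∀ n, M ≤ n → n ≤ N → c n ≤ 1/(2*Real.pi*δ) := by
    intro n h1 h2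
    obtain ⟨hl, hr⟩ := hdmem n h1 h2
    have hx0 : 0 < Real.pi * d n := mul_pos hπ (lt_of_lt_of_le hδ hl)
    have hx2 : Real.pi * d n < Real.pi/2 := by nlinarith [mul_le_mul_of_nonneg_left hr hπ.le]
    have htan := Real.lt_tan hx0 hx2
    rw [Real.tan_eq_sin_div_cos] at htan
    have hcos := hcospos n h1 h2
    have hsin := hsinpos n h1 h2
    have key : Real.pi * d n * Real.cos (Real.pi * d n) < Real.sin (Real.pi * d n) := by
      rw [lt_div_iff₀ hcos] at htan; linarith
    simp only [hc]
    rw [div_le_div_iff₀ (by nlinarith) (by positivity)]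
    nlinarith [key, mul_le_mul_of_nonneg_right (mul_le_mul_of_nonneg_left hl hπ.le) hcos.le]
  have hcmono : ∀ m n, M ≤ m → m ≤ n → n ≤ N → c m ≤ c n := by
    intro m n h1 h2 h3
    have hdm := hdmem m h1 (le_trans h2 h3)
    have hdn := hdmem n (le_trans h1 h2) h3
    have hdle : d n ≤ d m := hdanti m n h1 h2 h3
    have hsm := hsinpos m h1 (le_trans h2 h3)
    have hsn := hsinpos n (le_trans h1 h2) h3
    simp only [hc]
    rw [div_le_div_iff₀ (by nlinarith) (by nlinarith)]
    have hsub : 0 ≤ Real.sin (Real.pi * d m - Real.pi * d n) := by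
      apply Real.sin_nonneg_of_nonneg_of_le_pi
      · nlinarith [mul_le_mul_of_nonneg_left hdle hπ.le]
      · nlinarith [mul_le_mul_of_nonneg_left hdm.2 hπ.le, mul_nonneg hπ.le (le_trans hδ.le hdn.1)]
    rw [Real.sin_sub] at hsub
    nlinarith
  clear_value c
  -- C facts
  have hCeq : ∀ n, M ≤ n → n ≤ N → C n = c n := by
    intro n _ h2; simp [hC, min_eq_left h2]
  have hCnonneg : ∀ n, M ≤ n → 0 ≤ C n := by
    intro n h1; exact hcnonneg _ (le_min h1 hMN) (min_le_right _ _)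
  have hCbound : ∀ n, M ≤ n → C n ≤ 1/(2*Real.pi*δ) := by
    intro n h1; exact hcbound _ (le_min h1 hMN) (min_le_right _ _)
  have hCmono : ∀ m n, M ≤ m → m ≤ n → C m ≤ C n := by
    intro m n h1 h2
    exact hcmono _ _ (le_min h1 hMN) (min_le_min h2 le_rfl) (min_le_right _ _)
  have hCval : ∀ n, M ≤ n → n ≤ N → C n = c n := hCeq
  clear_value C
  -- norms of E
  have hEnorm : ∀ n, ‖E n‖ = 1 := by
    intro n; simp only [hE, Complex.norm_exp]
    norm_num [Complex.mul_re]
  have hEstep : ∀ n, E (n+1) = E n * Complex.exp (2*Real.pi*Complex.I*(d n : ℂ)) := by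
    intro n
    simp only [hE, ← Complex.exp_add]
    congr 1
    rw [hdval]; push_cast; ring
  clear_value E
  have huval : ∀ n, u n = E n - E (n+1) := fun _ => rfl
  clear_value u
  -- partial sums of u
  have hUsum : ∀ k, M ≤ k → ∑ n ∈ Finset.Ico M k, u n = E M - E k := by
    intro k hk
    have := tel E M k hk
    calc ∑ n ∈ Finset.Ico M k, u n = -∑ n ∈ Finset.Ico M k, (E (n+1) - E n) := by
          rw [← Finset.sum_neg_distrib]; apply Finset.sum_congr rfl; intro x _; rw [huval]; ring
      _ = E M - E k := by rw [this]; ring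
  have hUnorm : ∀ k, M ≤ k → ‖∑ n ∈ Finset.Ico M k, u n‖ ≤ 2 := by
    intro k hk
    rw [hUsum k hk]
    calc ‖E M - E k‖ ≤ ‖E M‖ + ‖E k‖ := norm_sub_le _ _
      _ = 2 := by rw [hEnorm, hEnorm]; norm_num
  -- key identity
  have hkey : ∀ n, M ≤ n → n ≤ N → E n = u n * (1/2 + Complex.I * (C n : ℂ)) := by
    intro n h1 h2
    have hsin := (hsinpos n h1 h2).ne'
    have hw := wident (d n) hsin
    rw [hCval n h1 h2, huval, hEstep n, hc]
    calc E n = E n * ((1 - Complex.exp (2*Real.pi*Complex.I*(d n : ℂ)))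
          * (1/2 + Complex.I * ((Real.cos (Real.pi * d n)/(2*Real.sin (Real.pi * d n)) : ℝ) : ℂ))) := by
          rw [hw, mul_one]
      _ = (E n - E n * Complex.exp (2*Real.pi*Complex.I*(d n : ℂ)))
          * (1/2 + Complex.I * ((Real.cos (Real.pi * d n)/(2*Real.sin (Real.pi * d n)) : ℝ) : ℂ)) := by
          ring
  -- rewrite the sum
  have hIcc : Finset.Icc M N = Finset.Ico M (N+1) := by rw [Finset.Ico_add_one_right_eq_Icc]
  have hsum : ∑ n ∈ Finset.Icc M N, E n
      = (∑ n ∈ Finset.Ico M (N+1), u n) * (1/2)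
        + (∑ n ∈ Finset.Ico M (N+1), u n * (C n : ℂ)) * Complex.I := by
    rw [hIcc]
    have hterm : ∀ n ∈ Finset.Ico M (N+1), E n = u n * (1/2) + (u n * (C n : ℂ)) * Complex.I := by
      intro n hn; rw [Finset.mem_Ico] at hn
      rw [hkey n hn.1 (by omega)]; ring
    rw [Finset.sum_congr rfl hterm, Finset.sum_add_distrib, ← Finset.sum_mul, ← Finset.sum_mul]
  -- abel on second sum
  have habel := abel_id u (fun n => (C n : ℂ)) M (N+1) (by omega)
  have htelC := tel C M (N+1) (by omega)
  have hsecond : ‖∑ n ∈ Finset.Ico M (N+1), u n * (C n : ℂ)‖ ≤ 2/(Real.pi*δ) := by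
    rw [habel]
    have h1 : ‖(∑ n ∈ Finset.Ico M (N+1), u n) * (C (N+1) : ℂ)‖ ≤ 2 * (1/(2*Real.pi*δ)) := by
      rw [norm_mul]
      apply mul_le_mul (hUnorm _ (by omega)) ?_ (norm_nonneg _) (by norm_num)
      rw [Complex.norm_real, Real.norm_eq_abs, abs_of_nonneg (hCnonneg _ (by omega))]
      exact hCbound _ (by omega)
    have h2 : ‖∑ n ∈ Finset.Ico M (N+1), (∑ k ∈ Finset.Ico M (n+1), u k) * ((C (n+1) : ℂ) - (C n : ℂ))‖
        ≤ 2 * (1/(2*Real.pi*δ)) := by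
      calc ‖∑ n ∈ Finset.Ico M (N+1), (∑ k ∈ Finset.Ico M (n+1), u k) * ((C (n+1) : ℂ) - (C n : ℂ))‖
          ≤ ∑ n ∈ Finset.Ico M (N+1), ‖(∑ k ∈ Finset.Ico M (n+1), u k) * ((C (n+1) : ℂ) - (C n : ℂ))‖ :=
            norm_sum_le _ _
        _ ≤ ∑ n ∈ Finset.Ico M (N+1), 2 * (C (n+1) - C n) := by
            apply Finset.sum_le_sum
            intro n hn
            rw [Finset.mem_Ico] at hn
            rw [norm_mul]
            have hCd : ‖(C (n+1) : ℂ) - (C n : ℂ)‖ = C (n+1) - C n := by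
              rw [← Complex.ofReal_sub, Complex.norm_real, Real.norm_eq_abs,
                abs_of_nonneg (by linarith [hCmono n (n+1) hn.1 (by omega)])]
            rw [hCd]
            apply mul_le_mul_of_nonneg_right (hUnorm _ (by omega))
            linarith [hCmono n (n+1) hn.1 (by omega)]
        _ = 2 * (C (N+1) - C M) := by
            rw [← Finset.mul_sum, htelC]
        _ ≤ 2 * (1/(2*Real.pi*δ)) := by
            have := hCbound (N+1) (by omega)
            have := hCnonneg M le_rfl
            nlinarith
    calc ‖(∑ n ∈ Finset.Ico M (N+1), u n) * (C (N+1) : ℂ)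
          - ∑ n ∈ Finset.Ico M (N+1), (∑ k ∈ Finset.Ico M (n+1), u k) * ((C (n+1) : ℂ) - (C n : ℂ))‖
        ≤ 2 * (1/(2*Real.pi*δ)) + 2 * (1/(2*Real.pi*δ)) := by
          refine le_trans (norm_sub_le _ _) (add_le_add h1 h2)
      _ = 2/(Real.pi*δ) := by field_simp; ring
  -- put together
  calc ‖∑ n ∈ Finset.Icc M N, E n‖
      ≤ ‖(∑ n ∈ Finset.Ico M (N+1), u n) * (1/2)‖
        + ‖(∑ n ∈ Finset.Ico M (N+1), u n * (C n : ℂ)) * Complex.I‖ := by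
        rw [hsum]; exact norm_add_le _ _
    _ ≤ 2 * (1/2) + (2/(Real.pi*δ)) * 1 := by
        apply add_le_add
        · rw [norm_mul]
          have h12 : ‖(1/2 : ℂ)‖ = 1/2 := by norm_num
          rw [h12]
          exact mul_le_mul_of_nonneg_right (hUnorm _ (by omega)) (by norm_num)
        · rw [norm_mul, Complex.norm_I, mul_one]
          simpa using hsecond
    _ ≤ 2 + 2/(Real.pi*δ) := by norm_num

set_option maxHeartbeats 1000000 in
lemma core (f f' : ℝ → ℝ) (x₁ : ℝ) (hx₁ : 0 < x₁)
    (hder : ∀ x, x₁ < x → HasDerivAt f (f' x) x)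
    (hanti : ∀ x y, x₁ < x → x ≤ y → f' y ≤ f' x)
    (hpos : ∀ x, x₁ < x → 0 < f' x)
    (hlim : Tendsto f' atTop (nhds 0))
    (hinf : Tendsto (fun x => x * f' x) atTop atTop) :
    Tendsto (fun N : ℕ => (N : ℂ)⁻¹ * ∑ n ∈ Finset.Icc 1 N,
        Complex.exp (2 * Real.pi * Complex.I * (f (n:ℝ) : ℂ))) atTop (nhds 0) := by
  have hπ := Real.pi_pos
  -- threshold beyond which f' < 1/4
  obtain ⟨X, hX⟩ := eventually_atTop.1 (hlim.eventually_lt_const (by norm_num : (0:ℝ) < 1/4))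
  obtain ⟨M₀, hM₀⟩ := exists_nat_gt (max x₁ X)
  set M : ℕ := M₀ + 1 with hMdef
  have hM1 : 1 ≤ M := by omega
  have hMx₁ : x₁ < (M:ℝ) := lt_of_le_of_lt (le_max_left _ _) (by push_cast [hMdef]; linarith)
  have hMX : X < (M:ℝ) := lt_of_le_of_lt (le_max_right _ _) (by push_cast [hMdef]; linarith)
  -- mean value theorem helper
  have hmvt : ∀ n : ℕ, (M:ℝ) ≤ n → ∃ ξ, (n:ℝ) < ξ ∧ ξ < (n:ℝ)+1 ∧
      f ((n:ℝ)+1) - f n = f' ξ := by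
    intro n hn
    have hnx : x₁ < (n:ℝ) := lt_of_lt_of_le hMx₁ hn
    have hcont : ContinuousOn f (Icc (n:ℝ) ((n:ℝ)+1)) := by
      intro x hx
      exact ((hder x (lt_of_lt_of_le hnx hx.1)).continuousAt).continuousWithinAt
    have hdio : ∀ x ∈ Ioo (n:ℝ) ((n:ℝ)+1), HasDerivAt f (f' x) x := by
      intro x hx; exact hder x (lt_trans hnx hx.1)
    obtain ⟨ξ, hξ, heq⟩ := exists_hasDerivAt_eq_slope f f' (by linarith) hcont hdio
    refine ⟨ξ, hξ.1, hξ.2, ?_⟩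
    rw [show (n:ℝ) + 1 - n = 1 by ring, div_one] at heq
    exact heq.symm
  -- the bounding sequence
  set b : ℕ → ℝ := fun N => (N:ℝ)⁻¹ * ((M:ℝ) + 2)
      + 2/(Real.pi * ((N:ℝ) * f' ((N:ℝ)+1))) with hb
  have hcast1 : Tendsto (fun N : ℕ => (N:ℝ)+1) atTop atTop :=
    tendsto_atTop_add_const_right _ 1 tendsto_natCast_atTop_atTop
  have hblim : Tendsto b atTop (nhds 0) := by
    have t1 : Tendsto (fun N : ℕ => (N:ℝ)⁻¹ * ((M:ℝ) + 2)) atTop (nhds 0) := by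
      have := tendsto_natCast_atTop_atTop (R := ℝ).inv_tendsto_atTop
      simpa using this.mul_const ((M:ℝ) + 2)
    have hNf : Tendsto (fun N : ℕ => (N:ℝ) * f' ((N:ℝ)+1)) atTop atTop := by
      have h1 : Tendsto (fun N : ℕ => ((N:ℝ)+1) * f' ((N:ℝ)+1)) atTop atTop :=
        hinf.comp hcast1
      have h2 : Tendsto (fun N : ℕ => -f' ((N:ℝ)+1)) atTop (nhds (-0)) :=
        (hlim.comp hcast1).neg
      have h3 := h1.atTop_add h2
      refine h3.congr ?_
      intro N; ring
    have t2 : Tendsto (fun N : ℕ => 2/(Real.pi * ((N:ℝ) * f' ((N:ℝ)+1)))) atTop (nhds 0) := by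
      have h4 : Tendsto (fun N : ℕ => Real.pi * ((N:ℝ) * f' ((N:ℝ)+1))) atTop atTop :=
        hNf.const_mul_atTop hπ
      have := h4.inv_tendsto_atTop
      simpa [div_eq_mul_inv] using this.const_mul 2
    simpa using t1.add t2
  apply squeeze_zero_norm' _ hblim
  filter_upwards [eventually_ge_atTop (M+1)] with N hN
  have hMN : M ≤ N := by omega
  have hN1 : 1 ≤ N := by omega
  have hNpos : (0:ℝ) < N := by exact_mod_cast Nat.pos_of_ne_zero (by omega)
  have hδpos : 0 < f' ((N:ℝ)+1) := hpos _ (by push_cast; linarith [hMx₁, (by exact_mod_cast hMN : (M:ℝ) ≤ N)])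
  set δ : ℝ := f' ((N:ℝ)+1) with hδdef
  -- apply kl on [M, N]
  have hkl : ‖∑ n ∈ Finset.Icc M N, Complex.exp (2*Real.pi*Complex.I*((f (n:ℝ) : ℝ) : ℂ))‖
      ≤ 2 + 2/(Real.pi*δ) := by
    apply kl (fun n => f (n:ℝ)) M N hMN δ hδpos
    · intro n h1 h2
      obtain ⟨ξ, hξ1, hξ2, heq⟩ := hmvt n (by exact_mod_cast h1)
      have hcn : ((n+1 : ℕ) : ℝ) = (n:ℝ)+1 := by push_cast; ring
      rw [hcn, heq]
      apply hanti ξ ((N:ℝ)+1)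
      · have : (M:ℝ) ≤ n := by exact_mod_cast h1
        linarith
      · have : (n:ℝ) ≤ N := by exact_mod_cast h2
        linarith
    · intro n h1 h2
      obtain ⟨ξ, hξ1, hξ2, heq⟩ := hmvt n (by exact_mod_cast h1)
      have hcn : ((n+1 : ℕ) : ℝ) = (n:ℝ)+1 := by push_cast; ring
      rw [hcn, heq]
      have : (M:ℝ) ≤ n := by exact_mod_cast h1
      exact le_of_lt (hX ξ (by linarith))
    · intro m n h1 h2 h3
      rcases eq_or_lt_of_le h2 with rfl | hlt
      · exact le_rfl
      obtain ⟨ξm, hm1, hm2, heqm⟩ := hmvt m (by exact_mod_cast h1)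
      obtain ⟨ξn, hn1, hn2, heqn⟩ := hmvt n (by exact_mod_cast (le_trans h1 h2))
      have hcm : ((m+1 : ℕ) : ℝ) = (m:ℝ)+1 := by push_cast; ring
      have hcn : ((n+1 : ℕ) : ℝ) = (n:ℝ)+1 := by push_cast; ring
      rw [hcm, hcn, heqm, heqn]
      apply hanti ξm ξn
      · have : (M:ℝ) ≤ m := by exact_mod_cast h1
        linarith
      · have : (m:ℝ)+1 ≤ n := by exact_mod_cast hlt
        linarith
  -- split the sum
  have hsplit : ∑ n ∈ Finset.Icc 1 N, Complex.exp (2*Real.pi*Complex.I*((f (n:ℝ) : ℝ) : ℂ))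
      = (∑ n ∈ Finset.Ico 1 M, Complex.exp (2*Real.pi*Complex.I*((f (n:ℝ) : ℝ) : ℂ)))
        + ∑ n ∈ Finset.Icc M N, Complex.exp (2*Real.pi*Complex.I*((f (n:ℝ) : ℝ) : ℂ)) := by
    rw [← Finset.Ico_add_one_right_eq_Icc 1 N, ← Finset.Ico_add_one_right_eq_Icc M N,
      ← Finset.sum_Ico_consecutive _ hM1 (by omega : M ≤ N+1)]
  have hfirst : ‖∑ n ∈ Finset.Ico 1 M, Complex.exp (2*Real.pi*Complex.I*((f (n:ℝ) : ℝ) : ℂ))‖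
      ≤ (M:ℝ) := by
    refine le_trans (norm_sum_le _ _) ?_
    have : ∀ n ∈ Finset.Ico 1 M, ‖Complex.exp (2*Real.pi*Complex.I*((f (n:ℝ) : ℝ) : ℂ))‖ = 1 := by
      intro n _
      simp only [Complex.norm_exp]
      norm_num [Complex.mul_re]
    rw [Finset.sum_congr rfl this, Finset.sum_const, Nat.card_Ico]
    simp only [nsmul_eq_mul, mul_one]
    have : M - 1 ≤ M := by omega
    exact_mod_cast this
  have hbound : ‖∑ n ∈ Finset.Icc 1 N, Complex.exp (2*Real.pi*Complex.I*((f (n:ℝ) : ℝ) : ℂ))‖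
      ≤ (M:ℝ) + 2 + 2/(Real.pi*δ) := by
    rw [hsplit]
    refine le_trans (norm_add_le _ _) ?_
    linarith [hfirst, hkl]
  -- conclude
  rw [norm_mul, norm_inv, Complex.norm_natCast]
  have hstep : (N:ℝ)⁻¹ * ‖∑ n ∈ Finset.Icc 1 N, Complex.exp (2*Real.pi*Complex.I*((f (n:ℝ) : ℝ) : ℂ))‖
      ≤ (N:ℝ)⁻¹ * ((M:ℝ) + 2 + 2/(Real.pi*δ)) :=
    mul_le_mul_of_nonneg_left hbound (by positivity)
  have hNne : (N:ℝ) ≠ 0 := ne_of_gt hNpos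
  have hδne : f' ((N:ℝ)+1) ≠ 0 := ne_of_gt hδpos
  calc (N:ℝ)⁻¹ * ‖∑ n ∈ Finset.Icc 1 N, Complex.exp (2*Real.pi*Complex.I*((f (n:ℝ) : ℝ) : ℂ))‖
      ≤ (N:ℝ)⁻¹ * ((M:ℝ) + 2 + 2/(Real.pi*δ)) := hstep
    _ = b N := by
        simp only [hb, hδdef]
        field_simp

lemma conj_trick (r : ℕ → ℝ)
    (H : Tendsto (fun N : ℕ => (N : ℂ)⁻¹ * ∑ n ∈ Finset.Icc 1 N,
        Complex.exp (2 * Real.pi * Complex.I * ((-(r n) : ℝ) : ℂ))) atTop (nhds 0)) :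
    Tendsto (fun N : ℕ => (N : ℂ)⁻¹ * ∑ n ∈ Finset.Icc 1 N,
        Complex.exp (2 * Real.pi * Complex.I * ((r n : ℝ) : ℂ))) atTop (nhds 0) := by
  have hc := (Complex.continuous_conj.tendsto 0).comp H
  simp only [Function.comp_def, map_zero] at hc
  refine hc.congr ?_
  intro N
  rw [map_mul, map_inv₀, map_sum]
  congr 1
  · simp
  · apply Finset.sum_congr rfl
    intro n _
    rw [← Complex.exp_conj]
    congr 1
    simp only [map_mul, Complex.conj_I, Complex.conj_ofReal, map_ofNat]
    push_cast
    ring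

lemma aux1 (g φ : ℝ → ℝ) (x₁ : ℝ) (hx₁ : 0 < x₁)
    (hder : ∀ x, x₁ < x → HasDerivAt g (φ x) x)
    (hanti : ∀ x y, x₁ < x → x ≤ y → φ y ≤ φ x)
    (hpos : ∀ x, x₁ < x → 0 < φ x)
    (hlim : Tendsto φ atTop (nhds 0))
    (hinf : Tendsto (fun x => x * φ x) atTop atTop)
    (k : ℤ) (hk : 0 < k) :
    Tendsto (fun N : ℕ => (N : ℂ)⁻¹ * ∑ n ∈ Finset.Icc 1 N,
        Complex.exp (2 * Real.pi * Complex.I * (((k:ℝ) * g (n:ℝ) : ℝ) : ℂ))) atTop (nhds 0) := by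
  have hk' : (0:ℝ) < (k:ℝ) := by exact_mod_cast hk
  apply core (fun x => (k:ℝ) * g x) (fun x => (k:ℝ) * φ x) x₁ hx₁
  · intro x hx; exact (hder x hx).const_mul _
  · intro x y hx hxy
    have := hanti x y hx hxy
    nlinarith
  · intro x hx
    exact mul_pos hk' (hpos x hx)
  · simpa using hlim.const_mul ((k:ℝ))
  · have heq : (fun x => x * ((k:ℝ) * φ x)) = fun x => (k:ℝ) * (x * φ x) := by
      funext x; ring
    rw [heq]
    exact hinf.const_mul_atTop hk'

lemma aux2 (g φ : ℝ → ℝ) (x₁ : ℝ) (hx₁ : 0 < x₁)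
    (hder : ∀ x, x₁ < x → HasDerivAt g (φ x) x)
    (hanti : ∀ x y, x₁ < x → x ≤ y → φ y ≤ φ x)
    (hpos : ∀ x, x₁ < x → 0 < φ x)
    (hlim : Tendsto φ atTop (nhds 0))
    (hinf : Tendsto (fun x => x * φ x) atTop atTop) :
    ∀ h : ℤ, h ≠ 0 → Tendsto (fun N : ℕ => (N : ℂ)⁻¹ * ∑ n ∈ Finset.Icc 1 N,
        Complex.exp (2 * Real.pi * Complex.I * (((h:ℝ) * g (n:ℝ) : ℝ) : ℂ))) atTop (nhds 0) := by
  intro h hh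
  rcases lt_or_gt_of_ne hh with hneg | hpos'
  · apply conj_trick (fun n => (h:ℝ) * g (n:ℝ))
    have H := aux1 g φ x₁ hx₁ hder hanti hpos hlim hinf (-h) (by omega)
    refine H.congr ?_
    intro N
    congr 1
    apply Finset.sum_congr rfl
    intro n _
    congr 2
    push_cast
    ring
  · exact aux1 g φ x₁ hx₁ hder hanti hpos hlim hinf h hpos'

/-- (Fejér) If `g` is C¹ on `[x₀, ∞)` with `g'` tending monotonically to `0` and
`x * |g'(x)| → ∞`, then `(g(n))ₙ` is equidistributed mod 1, in the sense of Weyl: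
for every nonzero integer `h`, `(1/N) ∑_{n=1}^N e^{2πi h g(n)} → 0`. -/
theorem stmt7 (g : ℝ → ℝ) (x₀ : ℝ) (hx₀ : 0 ≤ x₀)
    (hg : ContDiffOn ℝ 1 g (Ici x₀))
    (hmono : MonotoneOn (deriv g) (Ici x₀) ∨ AntitoneOn (deriv g) (Ici x₀))
    (h0 : Tendsto (deriv g) atTop (nhds 0))
    (hinf : Tendsto (fun x => x * |deriv g x|) atTop atTop) :
    ∀ h : ℤ, h ≠ 0 →
      Tendsto (fun N : ℕ => (N : ℂ)⁻¹ * ∑ n ∈ Finset.Icc 1 N,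
        Complex.exp (2 * Real.pi * Complex.I * (h : ℂ) * (g (n : ℝ) : ℂ)))
        atTop (nhds 0) := by
  intro h hh
  set φ : ℝ → ℝ := deriv g with hφ
  -- derivative exists pointwise beyond x₀
  have hder : ∀ x, x₀ < x → HasDerivAt g (φ x) x := by
    intro x hx
    have hdiff : DifferentiableWithinAt ℝ g (Ici x₀) x :=
      (hg.differentiableOn one_ne_zero) x (le_of_lt hx)
    exact (hdiff.differentiableAt (Ici_mem_nhds hx)).hasDerivAt
  -- beyond Y, x * |φ x| ≥ 1 hence φ x ≠ 0
  obtain ⟨Y, hY⟩ := eventually_atTop.1 (hinf.eventually_ge_atTop 1)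
  set x₁ : ℝ := max (max x₀ Y) 1 with hx₁def
  have hx₁pos : 0 < x₁ := lt_of_lt_of_le one_pos (le_max_right _ _)
  have hx₁x₀ : x₀ ≤ x₁ := le_trans (le_max_left _ _) (le_max_left _ _)
  have hx₁Y : Y ≤ x₁ := le_trans (le_max_right x₀ Y) (le_max_left _ _)
  have hφne : ∀ x, x₁ < x → φ x ≠ 0 := by
    intro x hx h0'
    have h1 := hY x (le_of_lt (lt_of_le_of_lt hx₁Y hx))
    rw [h0'] at h1
    simp at h1
    linarith
  -- rewrite the goal with real-valued phases
  have hgoal : (fun N : ℕ => (N : ℂ)⁻¹ * ∑ n ∈ Finset.Icc 1 N,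
        Complex.exp (2 * Real.pi * Complex.I * (h : ℂ) * (g (n : ℝ) : ℂ)))
      = (fun N : ℕ => (N : ℂ)⁻¹ * ∑ n ∈ Finset.Icc 1 N,
        Complex.exp (2 * Real.pi * Complex.I * (((h:ℝ) * g (n:ℝ) : ℝ) : ℂ))) := by
    funext N
    congr 1
    apply Finset.sum_congr rfl
    intro n _
    congr 1
    push_cast
    ring
  rw [hgoal]
  rcases hmono with hm | hm
  · -- φ monotone increasing to 0, so φ ≤ 0 ; use -g, -φ, -h
    have hφle : ∀ x, x₀ ≤ x → φ x ≤ 0 := by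
      intro x hx
      by_contra hcon
      push_neg at hcon
      obtain ⟨Z, hZ⟩ := eventually_atTop.1 (h0.eventually_lt_const hcon)
      have hy1 : φ x ≤ φ (max x Z) :=
        hm (mem_Ici.2 hx) (mem_Ici.2 (le_trans hx (le_max_left _ _))) (le_max_left _ _)
      have hy2 : φ (max x Z) < φ x := hZ _ (le_max_right _ _)
      linarith
    have hφneg : ∀ x, x₁ < x → φ x < 0 := by
      intro x hx
      rcases lt_or_eq_of_le (hφle x (le_trans hx₁x₀ (le_of_lt hx))) with h' | h'
      · exact h'
      · exact absurd h' (hφne x hx)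
    have H := aux2 (fun x => -g x) (fun x => -φ x) x₁ hx₁pos
      (fun x hx => ((hder x (lt_of_le_of_lt hx₁x₀ hx)).neg))
      (fun x y hx hxy => by
        have := hm (mem_Ici.2 (le_trans hx₁x₀ (le_of_lt hx)))
          (mem_Ici.2 (le_trans hx₁x₀ (le_of_lt (lt_of_lt_of_le hx hxy)))) hxy
        show -φ y ≤ -φ x
        linarith)
      (fun x hx => by have := hφneg x hx; show (0:ℝ) < -φ x; linarith)
      (by simpa using h0.neg)
      (by
        refine hinf.congr' ?_
        filter_upwards [eventually_gt_atTop x₁] with x hx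
        rw [abs_of_neg (hφneg x hx)])
      (-h) (neg_ne_zero.2 hh)
    refine H.congr ?_
    intro N
    congr 1
    apply Finset.sum_congr rfl
    intro n _
    congr 2
    push_cast
    ring
  · -- φ antitone to 0, so φ ≥ 0
    have hφge : ∀ x, x₀ ≤ x → 0 ≤ φ x := by
      intro x hx
      by_contra hcon
      push_neg at hcon
      obtain ⟨Z, hZ⟩ := eventually_atTop.1 (h0.eventually_const_lt hcon)
      have hy1 : φ (max x Z) ≤ φ x :=
        hm (mem_Ici.2 hx) (mem_Ici.2 (le_trans hx (le_max_left _ _))) (le_max_left _ _)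
      have hy2 : φ x < φ (max x Z) := hZ _ (le_max_right _ _)
      linarith
    have hφpos : ∀ x, x₁ < x → 0 < φ x := by
      intro x hx
      rcases lt_or_eq_of_le (hφge x (le_trans hx₁x₀ (le_of_lt hx))) with h' | h'
      · exact h'
      · exact absurd h'.symm (hφne x hx)
    exact aux2 g φ x₁ hx₁pos
      (fun x hx => hder x (lt_of_le_of_lt hx₁x₀ hx))
      (fun x y hx hxy => hm (mem_Ici.2 (le_trans hx₁x₀ (le_of_lt hx)))
        (mem_Ici.2 (le_trans hx₁x₀ (le_of_lt (lt_of_lt_of_le hx hxy)))) hxy)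
      hφpos h0
      (by
        refine hinf.congr' ?_
        filter_upwards [eventually_gt_atTop x₁] with x hx
        rw [abs_of_pos (hφpos x hx)])
      h hh
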